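/- Fix t > 0, ξ > 0, y₀ > 0 and p > 1, set η := 1/(2(p-1)), and define χ(τ,p) := τ^{2p}·exp(-y₀^{2(1-p)}/(2ξ²t(1-p)²)) / ((p-1)ξ²t·Γ(1+η)·(2(1-p)²ξ²t)^η). Then for all y > 0 and τ > 0: (i) ζ_p(y/τ) ≥ (χ(τ,p)/y^{2p})·(1 - (1/(2ξ²t(1-p)²))·(τ/y)^{2p-2}); and (ii) ζ_p(y/τ) ≤ (χ(τ,p)/y^{2p})·(1 + exp(y₀^{2-2p}/(2(p-1)²tξ²))·[ (1/(2ξ²t(1-p)²))·(τ/y)^{2p-2} + (1/(ξ²t(1-p)²))·(τ/(y·y₀))^{p-1} ]). -/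

import Mathlib

/-- The modified Bessel function of the first kind of order `ν`. -/
noncomputable def besselI (ν x : ℝ) : ℝ :=
  ∑' m : ℕ, (x / 2) ^ (2 * (m : ℝ) + ν) / ((m.factorial : ℝ) * Real.Gamma ((m : ℝ) + ν + 1))

private lemma gammaFact {s : ℝ} (hs : 0 < s) (m : ℕ) :
    Real.Gamma (1 + s) * m.factorial ≤ Real.Gamma ((m : ℝ) + s + 1) := by
  induction m with
  | zero => simp [add_comm 1 s]
  | succ n ih =>
    have hpos : (0:ℝ) < (n:ℝ) + s + 1 := by positivity
    have hΓ := Real.Gamma_pos_of_pos hpos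
    have h1 : ((n+1 : ℕ) : ℝ) + s + 1 = ((n:ℝ) + s + 1) + 1 := by push_cast; ring
    rw [h1, Real.Gamma_add_one (ne_of_gt hpos)]
    have h2 : (((n+1 : ℕ)).factorial : ℝ) = ((n:ℝ)+1) * (n.factorial : ℝ) := by
      push_cast [Nat.factorial_succ]; ring
    rw [h2]
    have hfn : (0:ℝ) ≤ (n.factorial : ℝ) := by positivity
    have hn1 : (0:ℝ) ≤ (n:ℝ) + 1 := by positivity
    nlinarith [mul_le_mul_of_nonneg_left ih hn1]

private lemma combineEq (s zp yz E1 E2 T P D G Y T2 : ℝ) (hD : D ≠ 0) (hG : G ≠ 0)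
    (hP : P ≠ 0) (hY : Y ≠ 0) (key : s * zp * yz = T2 / Y) :
    s * zp / D * (E1 * E2) * (yz / P * T) = T2 * E2 / (D * G * P) / Y * (E1 * (G * T)) := by
  have h : s * zp / D * (E1 * E2) * (yz / P * T) = s * zp * yz * (E1 * E2 * T) / (D * P) := by
    ring
  rw [h, key]
  field_simp


private lemma lowerAux {u S : ℝ} (hu : 0 ≤ u) (hS1 : 1 ≤ S) : 1 - u ≤ Real.exp (-u) * S := by
  have h1 := Real.add_one_le_exp (-u)
  nlinarith [Real.exp_pos (-u)]

private lemma upperAux {u K v S : ℝ} (hu : 0 ≤ u) (hv : 0 ≤ v)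
    (hS_le : S ≤ 1 + Real.exp K * u * Real.exp u) :
    Real.exp (-u) * S ≤ 1 + Real.exp K * (u + v) := by
  have h1 : Real.exp (-u) * S ≤ Real.exp (-u) * (1 + Real.exp K * u * Real.exp u) :=
    mul_le_mul_of_nonneg_left hS_le (Real.exp_pos _).le
  have h3 : Real.exp (-u) * Real.exp u = 1 := by rw [← Real.exp_add]; simp
  have h2 : Real.exp (-u) * (1 + Real.exp K * u * Real.exp u)
      = Real.exp (-u) + Real.exp K * u := by
    calc Real.exp (-u) * (1 + Real.exp K * u * Real.exp u)
        = Real.exp (-u) + Real.exp K * u * (Real.exp (-u) * Real.exp u) := by ring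
      _ = Real.exp (-u) + Real.exp K * u := by rw [h3, mul_one]
  have h4 : Real.exp (-u) ≤ 1 := Real.exp_le_one_iff.2 (by linarith)
  nlinarith [Real.exp_pos K]

set_option maxHeartbeats 1000000 in
theorem stmt_6 (t ξ y0 p : ℝ) (ht : 0 < t) (hξ : 0 < ξ) (hy0 : 0 < y0) (hp : 1 < p)
    (y τ : ℝ) (hy : 0 < y) (hτ : 0 < τ) :
    let η : ℝ := 1 / (2 * (p - 1))
    -- the CEV density (case `p > 1`)
    let ζ : ℝ → ℝ := fun z =>
      Real.sqrt y0 * z ^ ((1 : ℝ) / 2 - 2 * p) / ((p - 1) * ξ ^ 2 * t)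
        * Real.exp (-(z ^ (2 * (1 - p)) + y0 ^ (2 * (1 - p))) / (2 * ξ ^ 2 * t * (1 - p) ^ 2))
        * besselI η ((y0 * z) ^ (1 - p) / ((1 - p) ^ 2 * ξ ^ 2 * t))
    let χ : ℝ := τ ^ (2 * p) * Real.exp (-(y0 ^ (2 * (1 - p))) / (2 * ξ ^ 2 * t * (1 - p) ^ 2))
        / ((p - 1) * ξ ^ 2 * t * Real.Gamma (1 + η) * (2 * (1 - p) ^ 2 * ξ ^ 2 * t) ^ η)
    (χ / y ^ (2 * p)) * (1 - (1 / (2 * ξ ^ 2 * t * (1 - p) ^ 2)) * (τ / y) ^ (2 * p - 2))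
        ≤ ζ (y / τ)
    ∧ ζ (y / τ) ≤ (χ / y ^ (2 * p)) *
        (1 + Real.exp (y0 ^ (2 - 2 * p) / (2 * (p - 1) ^ 2 * t * ξ ^ 2)) *
          ((1 / (2 * ξ ^ 2 * t * (1 - p) ^ 2)) * (τ / y) ^ (2 * p - 2)
            + (1 / (ξ ^ 2 * t * (1 - p) ^ 2)) * (τ / (y * y0)) ^ (p - 1))) := by
  intro η ζ χ
  have hηdef : η = 1 / (2 * (p - 1)) := rfl
  have hp1 : (0:ℝ) < p - 1 := sub_pos.2 hp
  have h1p : (1:ℝ) - p ≠ 0 := by intro h; nlinarith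
  have hηpos : 0 < η := by rw [hηdef]; positivity
  have hΓη : 0 < Real.Gamma (1 + η) := Real.Gamma_pos_of_pos (by positivity)
  have hsq : ((1:ℝ) - p) ^ 2 = (p - 1) ^ 2 := by ring
  -- positivity of the various constants
  have hA : (0:ℝ) < 2 * ξ ^ 2 * t * (1 - p) ^ 2 := by rw [hsq]; positivity
  have hQ : (0:ℝ) < (1 - p) ^ 2 * ξ ^ 2 * t := by rw [hsq]; positivity
  have hQ' : (0:ℝ) < ξ ^ 2 * t * (1 - p) ^ 2 := by rw [hsq]; positivity
  have hP2 : (0:ℝ) < 2 * (1 - p) ^ 2 * ξ ^ 2 * t := by rw [hsq]; positivity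
  have hD : (0:ℝ) < (p - 1) * ξ ^ 2 * t := by positivity
  have hPpos : (0:ℝ) < (2 * (1 - p) ^ 2 * ξ ^ 2 * t) ^ η := Real.rpow_pos_of_pos hP2 η
  have hY : (0:ℝ) < y ^ (2 * p) := Real.rpow_pos_of_pos hy _
  set z : ℝ := y / τ with hz_def
  have hz : 0 < z := div_pos hy hτ
  have hy0z : (0:ℝ) < y0 * z := mul_pos hy0 hz
  set u : ℝ := 1 / (2 * ξ ^ 2 * t * (1 - p) ^ 2) * (τ / y) ^ (2 * p - 2) with hu_def
  set K : ℝ := y0 ^ (2 - 2 * p) / (2 * (p - 1) ^ 2 * t * ξ ^ 2) with hK_def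
  set v : ℝ := 1 / (ξ ^ 2 * t * (1 - p) ^ 2) * (τ / (y * y0)) ^ (p - 1) with hv_def
  have hu : 0 < u := by
    rw [hu_def]
    exact mul_pos (one_div_pos.2 hA) (Real.rpow_pos_of_pos (div_pos hτ hy) _)
  have hK : 0 < K := by
    rw [hK_def]
    exact div_pos (Real.rpow_pos_of_pos hy0 _) (by positivity)
  have hv : 0 < v := by
    rw [hv_def]
    exact mul_pos (one_div_pos.2 hQ') (Real.rpow_pos_of_pos (div_pos hτ (mul_pos hy hy0)) _)
  have hχ : 0 < χ := by
    simp only [χ]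
    exact div_pos (mul_pos (Real.rpow_pos_of_pos hτ _) (Real.exp_pos _))
      (mul_pos (mul_pos hD hΓη) hPpos)
  set x : ℝ := (y0 * z) ^ (1 - p) / ((1 - p) ^ 2 * ξ ^ 2 * t) with hx_def
  have hx : 0 < x := div_pos (Real.rpow_pos_of_pos hy0z _) hQ
  have hx2 : 0 < x / 2 := by positivity
  set c : ℝ := (x / 2) ^ 2 with hc_def
  have hcnn : 0 ≤ c := by rw [hc_def]; positivity
  set g : ℕ → ℝ := fun m => c ^ m / ((m.factorial : ℝ) * Real.Gamma ((m : ℝ) + η + 1))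
    with hg_def
  have hΓm : ∀ m : ℕ, 0 < Real.Gamma ((m : ℝ) + η + 1) := fun m =>
    Real.Gamma_pos_of_pos (by positivity)
  have hgnn : ∀ m, 0 ≤ g m := by
    intro m
    rw [hg_def]
    exact div_nonneg (pow_nonneg hcnn m)
      (mul_nonneg (Nat.cast_nonneg _) (hΓm m).le)
  have hΓmono : ∀ m : ℕ, Real.Gamma (1 + η) ≤ Real.Gamma ((m : ℝ) + η + 1) := by
    intro m
    have h1 := gammaFact hηpos m
    have hf1 : (1:ℝ) ≤ (m.factorial : ℝ) := by exact_mod_cast m.factorial_pos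
    nlinarith
  have hsum : Summable g := by
    apply Summable.of_nonneg_of_le hgnn (fun m => ?_)
      ((Real.summable_pow_div_factorial c).mul_right (1 / Real.Gamma (1 + η)))
    rw [hg_def, mul_one_div, div_div]
    apply div_le_div_of_nonneg_left (pow_nonneg hcnn m)
      (mul_pos (by exact_mod_cast m.factorial_pos) hΓη)
    exact mul_le_mul_of_nonneg_left (hΓmono m) (Nat.cast_nonneg _)
  -- Bessel series expansion
  have hbes : besselI η x = (x / 2) ^ η * ∑' m, g m := by
    unfold besselI
    rw [← tsum_mul_left]
    refine tsum_congr fun m => ?_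
    rw [hg_def]
    have h1 : (x / 2) ^ (2 * (m : ℝ) + η) = (x / 2) ^ (2 * (m : ℝ)) * (x / 2) ^ η :=
      Real.rpow_add hx2 _ _
    have h2 : (2 : ℝ) * (m : ℝ) = ((2 * m : ℕ) : ℝ) := by push_cast; ring
    rw [h1, h2, Real.rpow_natCast, pow_mul, ← hc_def]
    ring
  -- exponent identities
  have hw : z ^ (2 * (1 - p)) = (τ / y) ^ (2 * p - 2) := by
    rw [hz_def, show y / τ = (τ / y)⁻¹ by rw [inv_div],
      Real.inv_rpow (div_pos hτ hy).le, ← Real.rpow_neg (div_pos hτ hy).le,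
      show -(2 * (1 - p)) = 2 * p - 2 by ring]
  have hexpη : (1 - p) * η = -(1/2 : ℝ) := by
    rw [hηdef]
    field_simp
    ring
  have hF1 : Real.sqrt y0 * (y0 * z) ^ (-(1/2 : ℝ)) = z ^ (-(1/2 : ℝ)) := by
    rw [Real.sqrt_eq_rpow, Real.mul_rpow hy0.le hz.le, ← mul_assoc,
      ← Real.rpow_add hy0]
    norm_num
  have hkey : Real.sqrt y0 * z ^ ((1:ℝ)/2 - 2 * p) * (y0 * z) ^ (-(1/2 : ℝ))
      = τ ^ (2 * p) / y ^ (2 * p) := by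
    have e1 : Real.sqrt y0 * z ^ ((1:ℝ)/2 - 2 * p) * (y0 * z) ^ (-(1/2 : ℝ))
        = (Real.sqrt y0 * (y0 * z) ^ (-(1/2 : ℝ))) * z ^ ((1:ℝ)/2 - 2 * p) := by ring
    rw [e1, hF1, ← Real.rpow_add hz, show -(1/2 : ℝ) + ((1:ℝ)/2 - 2*p) = -(2*p) by ring]
    rw [hz_def, Real.rpow_neg (div_pos hy hτ).le, Real.div_rpow hy.le hτ.le, inv_div]
  have hx2eq : x / 2 = (y0 * z) ^ (1 - p) / (2 * (1 - p) ^ 2 * ξ ^ 2 * t) := by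
    rw [hx_def, div_div]
    congr 1
    ring
  have hF4 : (x / 2) ^ η = (y0 * z) ^ (-(1/2 : ℝ)) / (2 * (1 - p) ^ 2 * ξ ^ 2 * t) ^ η := by
    rw [hx2eq, Real.div_rpow (Real.rpow_nonneg hy0z.le _) hP2.le, ← Real.rpow_mul hy0z.le,
      hexpη]
  have hF5 : Real.exp (-(z ^ (2 * (1 - p)) + y0 ^ (2 * (1 - p))) / (2 * ξ ^ 2 * t * (1 - p) ^ 2))
      = Real.exp (-u) * Real.exp (-(y0 ^ (2 * (1 - p))) / (2 * ξ ^ 2 * t * (1 - p) ^ 2)) := by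
    rw [← Real.exp_add]
    congr 1
    rw [hw, hu_def]
    field_simp
    ring
  set T : ℝ := ∑' m, g m with hT_def
  set S : ℝ := Real.Gamma (1 + η) * T with hS_def
  -- the main factorization
  have hζeq : ζ (y / τ) = χ / y ^ (2 * p) * (Real.exp (-u) * S) := by
    simp only [ζ, χ]
    rw [← hz_def, ← hx_def, hbes, hF4, hF5, hS_def]
    exact combineEq _ _ _ _ _ _ _ _ _ _ _ hD.ne' hΓη.ne' hPpos.ne' hY.ne' hkey
  -- c = u * K
  have hc : c = u * K := by
    have h1 : ((y0 * z) ^ ((1:ℝ) - p)) ^ (2:ℕ) = y0 ^ (2 - 2 * p) * (τ / y) ^ (2 * p - 2) := by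
      rw [← Real.rpow_natCast ((y0 * z) ^ ((1:ℝ) - p)) 2, ← Real.rpow_mul hy0z.le,
        show ((1:ℝ) - p) * ((2:ℕ):ℝ) = 2 * (1 - p) by push_cast; ring,
        Real.mul_rpow hy0.le hz.le, hw, show (2:ℝ) * (1 - p) = 2 - 2 * p by ring]
    rw [hc_def, hx_def, div_div, div_pow, h1, hu_def, hK_def]
    field_simp
    ring
  -- value at 0
  have hg00 : Real.Gamma (1 + η) * g 0 = 1 := by
    rw [hg_def]
    simp only [pow_zero, Nat.factorial_zero, Nat.cast_one, Nat.cast_zero, one_mul, zero_add]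
    rw [add_comm (1:ℝ) η] at hΓη ⊢
    rw [mul_one_div, div_self hΓη.ne']
  -- S ≥ 1
  have hS1 : 1 ≤ S := by
    have h1 : g 0 ≤ T := Summable.le_tsum hsum 0 (fun j _ => hgnn j)
    have h2 : Real.Gamma (1 + η) * g 0 ≤ Real.Gamma (1 + η) * T :=
      mul_le_mul_of_nonneg_left h1 hΓη.le
    rw [hg00] at h2
    exact h2
  -- termwise bound for the tail
  have hterm : ∀ m : ℕ, Real.Gamma (1 + η) * g (m + 1)
      ≤ Real.exp K * u * (u ^ m / (m.factorial : ℝ)) := by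
    intro m
    have hgb := gammaFact hηpos (m + 1)
    have hfac : (0:ℝ) < ((m+1).factorial : ℝ) := by exact_mod_cast (m+1).factorial_pos
    have hmfac : (0:ℝ) < (m.factorial : ℝ) := by exact_mod_cast m.factorial_pos
    have hΓp : 0 < Real.Gamma (((m+1 : ℕ) : ℝ) + η + 1) := hΓm (m+1)
    have hA1 : Real.Gamma (1 + η) * g (m + 1)
        ≤ c ^ (m+1) / (((m+1).factorial : ℝ) * ((m+1).factorial : ℝ)) := by
      rw [hg_def]
      have e1 : Real.Gamma (1 + η) * (c ^ (m+1) / (((m+1).factorial : ℝ) *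
          Real.Gamma (((m+1:ℕ):ℝ) + η + 1)))
          = c ^ (m+1) * (Real.Gamma (1 + η) / (((m+1).factorial : ℝ) *
            Real.Gamma (((m+1:ℕ):ℝ) + η + 1))) := by ring
      rw [e1]
      have e2 : c ^ (m+1) / (((m+1).factorial : ℝ) * ((m+1).factorial : ℝ))
          = c ^ (m+1) * (1 / (((m+1).factorial : ℝ) * ((m+1).factorial : ℝ))) := by ring
      rw [e2]
      apply mul_le_mul_of_nonneg_left ?_ (pow_nonneg hcnn _)
      rw [div_le_div_iff₀ (mul_pos hfac hΓp) (mul_pos hfac hfac)]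
      have hh := mul_le_mul_of_nonneg_right hgb hfac.le
      linarith [hh]
    have hB : c ^ (m+1) / (((m+1).factorial : ℝ) * ((m+1).factorial : ℝ))
        = (u ^ (m+1) / ((m+1).factorial : ℝ)) * (K ^ (m+1) / ((m+1).factorial : ℝ)) := by
      rw [hc, mul_pow]
      ring
    have hC : K ^ (m+1) / ((m+1).factorial : ℝ) ≤ Real.exp K := by
      have h := Real.sum_le_exp_of_nonneg hK.le (m + 2)
      have h2 : K ^ (m+1) / ((m+1).factorial : ℝ)
          ≤ ∑ i ∈ Finset.range (m + 2), K ^ i / (i.factorial : ℝ) := by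
        apply Finset.single_le_sum (f := fun i => K ^ i / (i.factorial : ℝ))
          (fun i _ => by positivity) (Finset.self_mem_range_succ (m+1))
      linarith
    have hD2 : u ^ (m+1) / ((m+1).factorial : ℝ) ≤ u * (u ^ m / (m.factorial : ℝ)) := by
      have hfle : (m.factorial : ℝ) ≤ ((m+1).factorial : ℝ) := by
        exact_mod_cast Nat.factorial_le (Nat.le_succ m)
      calc u ^ (m+1) / ((m+1).factorial : ℝ) ≤ u ^ (m+1) / (m.factorial : ℝ) :=
            div_le_div_of_nonneg_left (pow_nonneg hu.le _) hmfac hfle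
        _ = u * (u ^ m / (m.factorial : ℝ)) := by rw [pow_succ]; ring
    calc Real.Gamma (1 + η) * g (m + 1)
        ≤ (u ^ (m+1) / ((m+1).factorial : ℝ)) * (K ^ (m+1) / ((m+1).factorial : ℝ)) :=
          hA1.trans_eq hB
      _ ≤ (u * (u ^ m / (m.factorial : ℝ))) * Real.exp K := by
          apply mul_le_mul hD2 hC (by positivity) (by positivity)
      _ = Real.exp K * u * (u ^ m / (m.factorial : ℝ)) := by ring
  have hshift : Summable (fun m : ℕ => g (m + 1)) := (summable_nat_add_iff 1).2 hsum
  have htail : Real.Gamma (1 + η) * ∑' m, g (m + 1) ≤ Real.exp K * u * Real.exp u := by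
    rw [← tsum_mul_left]
    have hrs : Summable (fun m : ℕ => Real.exp K * u * (u ^ m / (m.factorial : ℝ))) :=
      (Real.summable_pow_div_factorial u).mul_left _
    have h1 : ∑' m, Real.Gamma (1 + η) * g (m + 1)
        ≤ ∑' m : ℕ, Real.exp K * u * (u ^ m / (m.factorial : ℝ)) :=
      Summable.tsum_le_tsum hterm (hshift.mul_left _) hrs
    have h2 : ∑' m : ℕ, Real.exp K * u * (u ^ m / (m.factorial : ℝ))
        = Real.exp K * u * ∑' m : ℕ, u ^ m / (m.factorial : ℝ) := tsum_mul_left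
    have h3 : ∑' m : ℕ, u ^ m / (m.factorial : ℝ) ≤ Real.exp u :=
      Real.tsum_le_of_sum_range_le (fun n => by positivity)
        (fun n => Real.sum_le_exp_of_nonneg hu.le n)
    rw [h2] at h1
    calc ∑' m, Real.Gamma (1 + η) * g (m + 1)
        ≤ Real.exp K * u * ∑' m : ℕ, u ^ m / (m.factorial : ℝ) := h1
      _ ≤ Real.exp K * u * Real.exp u :=
          mul_le_mul_of_nonneg_left h3 (by positivity)
  have hS_le : S ≤ 1 + Real.exp K * u * Real.exp u := by
    rw [hS_def, hT_def, Summable.tsum_eq_zero_add hsum, mul_add, hg00]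
    linarith [htail]
  -- final inequalities
  constructor
  · rw [hζeq]
    exact mul_le_mul_of_nonneg_left (lowerAux hu.le hS1) (div_pos hχ hY).le
  · rw [hζeq]
    exact mul_le_mul_of_nonneg_left (upperAux hu.le hv.le hS_le) (div_pos hχ hY).le
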